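/- Let A be an m×n matrix over a field F with nullity N, let ξ_1,...,ξ_N ∈ F^n be a basis of ker(A), and let Ξ ∈ F^{n×N} be the matrix with columns ξ_1,...,ξ_N. If I ⊆ {1,...,n} is not a relation of A and contains no frozen index of A, then the rows (Ξ_i)_{i∈I} of Ξ are linearly independent, i.e., rank((Ξ_i)_{i∈I}) = |I|. -/

import Mathlib

/-- `I` is a relation of `A`. -/
def IsRelation {F : Type*} [Field F] {m n : Type*} [Fintype m]
    (A : Matrix m n F) (I : Set n) : Prop :=
  ∃ y : m → F, (Function.support (Matrix.vecMul y A)).Nonempty ∧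
    Function.support (Matrix.vecMul y A) ⊆ I

/-- Nullity of a matrix. -/
noncomputable def nullity {F : Type*} [Field F] {m n : Type*} [Fintype m] [Fintype n]
    (A : Matrix m n F) : ℕ :=
  Module.finrank F (LinearMap.ker A.mulVecLin)

open Matrix in
theorem stmt_5 {F : Type*} [Field F] {m n N : ℕ}
    (A : Matrix (Fin m) (Fin n) F)
    (hN : N = nullity A)
    (ξ : Fin N → (Fin n → F))
    (hker : ∀ j, A.mulVec (ξ j) = 0)
    (hindep : LinearIndependent F ξ)
    (hspan : Submodule.span F (Set.range ξ) = LinearMap.ker A.mulVecLin)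
    (Ξ : Matrix (Fin n) (Fin N) F) (hΞ : ∀ i j, Ξ i j = ξ j i)
    (I : Finset (Fin n))
    (hrel : ¬ IsRelation A (↑I : Set (Fin n)))
    (hfroz : ∀ i ∈ I, ¬ IsRelation A {i}) :
    (Ξ.submatrix (fun i : {x // x ∈ I} => (i : Fin n)) id).rank = I.card := by
  classical
  -- The matrix M with rows ξ j
  set M : Matrix (Fin N) (Fin n) F := Matrix.of ξ with hM
  -- M as a function is ξ, so it has linearly independent rows
  have hMrank : M.rank = N := by
    have := hindep.rank_matrix (M := M)
    simpa using this
  -- W : vectors orthogonal to all ξ j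
  set W : Submodule F (Fin n → F) := LinearMap.ker M.mulVecLin with hW
  -- R : row space of A
  set R : Submodule F (Fin n → F) := LinearMap.range (Matrix.mulVecLin Aᵀ) with hR
  have hRW : R ≤ W := by
    rintro _ ⟨y, rfl⟩
    rw [LinearMap.mem_ker]
    funext j
    simp only [Matrix.mulVecLin_apply, Pi.zero_apply]
    have h1 : (M *ᵥ (Aᵀ *ᵥ y)) j = (Aᵀ *ᵥ y) ⬝ᵥ M j := by
      simp [Matrix.mulVec, dotProduct_comm]
    rw [h1, Matrix.mulVec_transpose, ← Matrix.dotProduct_mulVec]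
    have h2 : A.mulVec (M j) = 0 := hker j
    simp [h2]
  -- dimension count
  have hnull : Module.finrank F (LinearMap.ker A.mulVecLin) = N := hN.symm
  have hrankA : A.rank + N = n := by
    have := LinearMap.finrank_range_add_finrank_ker A.mulVecLin
    rw [hnull] at this
    simpa [Matrix.rank] using this
  have hfinR : Module.finrank F R + N = n := by
    have : Module.finrank F R = Matrix.rank Aᵀ := rfl
    rw [this, Matrix.rank_transpose]
    exact hrankA
  have hfinW : Module.finrank F W + N = n := by
    have h := LinearMap.finrank_range_add_finrank_ker M.mulVecLin
    rw [show Module.finrank F (LinearMap.range M.mulVecLin) = N from hMrank,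
      Module.finrank_fintype_fun_eq_card, Fintype.card_fin] at h
    rw [hW]
    omega
  have hRWeq : R = W := by
    apply Submodule.eq_of_le_of_finrank_le hRW
    omega
  -- now the main argument
  have hcard : Fintype.card {x // x ∈ I} = I.card := Fintype.card_coe I
  set B := Ξ.submatrix (fun i : {x // x ∈ I} => (i : Fin n)) id with hB
  have hBindep : LinearIndependent F (fun i : {x // x ∈ I} => B i) := by
    rw [Fintype.linearIndependent_iff]
    intro g hg
    by_contra hcon
    push_neg at hcon
    obtain ⟨i₀, hi₀⟩ := hcon
    -- extend g by zero
    set c : Fin n → F := fun i => if h : i ∈ I then g ⟨i, h⟩ else 0 with hc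
    have hcW : c ∈ W := by
      rw [hW, LinearMap.mem_ker]
      funext j
      have hgj := congrFun hg j
      simp only [Finset.sum_apply, Pi.smul_apply, Pi.zero_apply, smul_eq_mul] at hgj
      rw [Matrix.mulVecLin_apply]
      show (∑ i : Fin n, M j i * c i) = 0
      rw [← Finset.sum_subset (Finset.subset_univ I)
        (by intro i _ hi; simp [hc, hi])]
      rw [← Finset.sum_attach I (fun i => M j i * c i)]
      rw [← hgj]
      apply Finset.sum_congr rfl
      intro i _
      simp [hc, i.2, hB, hΞ, hM, mul_comm]
    rw [← hRWeq] at hcW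
    obtain ⟨y, hy⟩ := hcW
    apply hrel
    refine ⟨y, ?_, ?_⟩
    · refine ⟨(i₀ : Fin n), ?_⟩
      have : Matrix.vecMul y A = c := by
        rw [← Matrix.mulVec_transpose]; exact hy
      rw [Function.mem_support, this]
      simp [hc, i₀.2, hi₀]
    · intro i hi
      have : Matrix.vecMul y A = c := by
        rw [← Matrix.mulVec_transpose]; exact hy
      rw [Function.mem_support, this] at hi
      simp only [hc] at hi
      by_contra hiI
      simp only [Finset.coe_sort_coe, Finset.mem_coe] at hiI
      rw [dif_neg hiI] at hi
      exact hi rfl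
  have := hBindep.rank_matrix
  rw [hcard] at this
  simpa [hB, Matrix.submatrix] using this
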